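/- arXiv:1403.1802 — 2 statements merged into one kernel-verified Lean document; each statement's English description precedes it below -/
import Mathlib

section
/- Let F be a field of characteristic 2, u, v ∈ F* with u + v ≠ 0, and w ∈ F. Then in the Witt group W_q(F) one has ⟨1,u+v⟩_b ⊗ [1,w] = ⟨1,u⟩_b ⊗ [1, wu/(u+v)] + ⟨1,v⟩_b ⊗ [1, wv/(u+v)]. -/
/-!  A concrete coefficient-matrix model of (possibly singular) finite-dimensional
quadratic forms over a field, suitable for characteristic 2. -/

/-- Coefficient representation of a (finite-dimensional) quadratic form over a field `F`:
the form of dimension `dim` given by `q(x) = ∑ i j, c i j * x i * x j`. -/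
structure QF (F : Type*) [Field F] : Type _ where
  dim : ℕ
  c : Matrix (Fin dim) (Fin dim) F

namespace QF

variable {F E : Type*} [Field F] [Field E]

/-- Evaluation of the quadratic form at a vector. -/
def eval (q : QF F) (x : Fin q.dim → F) : F :=
  ∑ i, ∑ j, q.c i j * x i * x j

/-- Scalar extension (base change) of a quadratic form along a ring homomorphism. -/
def map (f : F →+* E) (q : QF F) : QF E :=
  ⟨q.dim, fun i j => f (q.c i j)⟩

/-- Orthogonal sum. -/
def orthSum (q q' : QF F) : QF F :=
  ⟨q.dim + q'.dim,
    Matrix.reindex finSumFinEquiv finSumFinEquiv (Matrix.fromBlocks q.c 0 0 q'.c)⟩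

/-- Scaling `a • q`. -/
def smul (a : F) (q : QF F) : QF F := ⟨q.dim, a • q.c⟩

/-- The nonsingular binary quadratic form `[a,b] : (x,y) ↦ ax² + xy + by²`. -/
def bin (a b : F) : QF F := ⟨2, !![a, 1; 0, b]⟩

/-- The diagonal (totally singular) quadratic form `⟨a₁, …, aₙ⟩`. -/
def diag {n : ℕ} (v : Fin n → F) : QF F := ⟨n, Matrix.diagonal v⟩

/-- The zero-dimensional quadratic form. -/
def nil : QF F := { dim := 0, c := 0 }

/-- The one-dimensional form `⟨1⟩`. -/
def unit : QF F := diag (fun _ : Fin 1 => (1 : F))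

/-- Orthogonal sum of a list of forms. -/
def sumList (l : List (QF F)) : QF F := l.foldr orthSum nil

/-- `pfTensor [a₁,…,aₙ] q` is the tensor product `⟨⟨a₁,…,aₙ⟩⟩_b ⊗ q` of the bilinear
Pfister form `⟨⟨a₁,…,aₙ⟩⟩_b = ⟨1,a₁⟩_b ⊗ ⋯ ⊗ ⟨1,aₙ⟩_b` with the quadratic form `q`,
via `⟨1,a⟩_b ⊗ q ≅ q ⊥ a·q`. -/
def pfTensor (l : List F) (q : QF F) : QF F :=
  l.foldr (fun a r => orthSum r (smul a r)) q

/-- The hyperbolic plane `ℍ ≅ [0,0]`. -/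
def hypPlane : QF F := bin 0 0

/-- The orthogonal sum of `k` hyperbolic planes. -/
def hyp (k : ℕ) : QF F := sumList (List.replicate k hypPlane)

/-- The `l`-dimensional zero form `⟨0,…,0⟩`. -/
def zeros (l : ℕ) : QF F := diag (fun _ : Fin l => (0 : F))

/-- Isometry of quadratic forms. -/
def Isometric (q q' : QF F) : Prop :=
  ∃ e : (Fin q.dim → F) ≃ₗ[F] (Fin q'.dim → F), ∀ x, q'.eval (e x) = q.eval x

/-- Anisotropy: the form has no nontrivial zero. -/
def Anisotropic (q : QF F) : Prop := ∀ x, q.eval x = 0 → x = 0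

/-- A quadratic form is nonsingular if the radical of its polar form
`B_q(x,y) = q(x+y) - q(x) - q(y)` (with matrix `c + cᵀ`) is trivial. -/
def Nonsingular (q : QF F) : Prop := ∀ x, (q.c + q.c.transpose).mulVec x = 0 → x = 0

/-- A quadratic form is totally singular if its polar form vanishes identically. -/
def TotallySingular (q : QF F) : Prop := q.c + q.c.transpose = 0

/-- A quadratic form is hyperbolic if it is isometric to an orthogonal sum of
hyperbolic planes. -/
def Hyperbolic (q : QF F) : Prop := ∃ k, Isometric q (hyp k)

/-- Witt equivalence: `q ~ q'` iff the anisotropic parts agree, equivalently the two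
forms become isometric after adding suitable numbers of hyperbolic planes and zero
forms. -/
def WittEquiv (q q' : QF F) : Prop :=
  ∃ k k' l l', Isometric (orthSum q (orthSum (hyp k) (zeros l)))
    (orthSum q' (orthSum (hyp k') (zeros l')))

/-- `AnisoPartOf φ q` : `φ` is (isometric to) the anisotropic part of `q`, i.e. `φ` is
anisotropic and `q ≅ k × ℍ ⊥ φ ⊥ ⟨0,…,0⟩`. -/
def AnisoPartOf (φ q : QF F) : Prop :=
  Anisotropic φ ∧ ∃ k l, Isometric q (orthSum (hyp k) (orthSum φ (zeros l)))

/-- `Dominates q' q` means `q ≺ q'`, i.e. `q'` dominates `q`: there is an injective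
linear map `t` of the underlying spaces with `q' ∘ t = q`. -/
def Dominates (q' q : QF F) : Prop :=
  ∃ t : (Fin q.dim → F) →ₗ[F] (Fin q'.dim → F), Function.Injective t ∧
    ∀ x, q'.eval (t x) = q.eval x

/-- The affine quadric polynomial `∑ cᵢⱼ XᵢXⱼ` of a quadratic form. -/
noncomputable def toPoly (q : QF F) : MvPolynomial (Fin q.dim) F :=
  ∑ i, ∑ j, MvPolynomial.C (q.c i j) * (MvPolynomial.X i * MvPolynomial.X j)

/-- The affine coordinate ring of the (reduced) quadric `q = 0`. -/
abbrev CoordRing (q : QF F) : Type _ :=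
  MvPolynomial (Fin q.dim) F ⧸ (Ideal.span {q.toPoly}).radical

/-- The function field of the quadric `q = 0` (assuming the quadric is integral). -/
abbrev FunctionField (q : QF F) [IsDomain (CoordRing q)] : Type _ :=
  FractionRing (CoordRing q)

/-- The canonical ring homomorphism from a base field `F` into the function field of a
quadric defined over an extension field `K` of `F`. -/
noncomputable def toFunctionField {K : Type*} [Field K] [Algebra F K] (q : QF K)
    [IsDomain (CoordRing q)] : F →+* FunctionField q :=
  (algebraMap (CoordRing q) (FunctionField q)).comp
    ((algebraMap K (CoordRing q)).comp (algebraMap F K))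

end QF

set_option linter.unusedSectionVars false
set_option maxHeartbeats 4000000

namespace QFAux
open QF
variable {F : Type*} [Field F]

lemma eval_orthSum (q q' : QF F) (x : Fin (q.orthSum q').dim → F) :
    (q.orthSum q').eval x
      = q.eval (fun i => x (Fin.castAdd q'.dim i)) + q'.eval (fun i => x (Fin.natAdd q.dim i)) := by
  simp only [QF.eval, QF.orthSum, Matrix.reindex_apply, Matrix.submatrix_apply]
  show ∑ i : Fin (q.dim + q'.dim), ∑ j : Fin (q.dim + q'.dim), _ = _
  rw [← Equiv.sum_comp (finSumFinEquiv (m := q.dim) (n := q'.dim))]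
  rw [Fintype.sum_sum_type]
  congr 1 <;>
  · refine Finset.sum_congr rfl fun i _ => ?_
    rw [← Equiv.sum_comp (finSumFinEquiv (m := q.dim) (n := q'.dim))]
    rw [Fintype.sum_sum_type]
    simp [Matrix.fromBlocks]

lemma eval_smul (a : F) (q : QF F) (x : Fin q.dim → F) :
    (q.smul a).eval x = a * q.eval x := by
  show ∑ i : Fin q.dim, ∑ j : Fin q.dim, _ = _
  simp [QF.eval, QF.smul, Finset.mul_sum, mul_assoc]

lemma eval_bin (a b : F) (x : Fin 2 → F) :
    (QF.bin a b).eval x = a * (x 0 * x 0) + x 0 * x 1 + b * (x 1 * x 1) := by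
  show ∑ i : Fin 2, ∑ j : Fin 2, _ = _
  simp [QF.eval, QF.bin, Fin.sum_univ_two]; ring

lemma eval_hypPlane (x : Fin 2 → F) : (QF.hypPlane (F := F)).eval x = x 0 * x 1 := by
  show (QF.bin 0 0).eval x = _
  rw [eval_bin]; ring

lemma eval_nil (x : Fin (QF.nil (F := F)).dim → F) : (QF.nil (F := F)).eval x = 0 := by
  simp [QF.eval, QF.nil]

lemma eval_zeros0 (x : Fin (QF.zeros (F := F) 0).dim → F) : (QF.zeros (F := F) 0).eval x = 0 := by
  simp [QF.eval, QF.zeros, QF.diag]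

lemma hyp_two : (QF.hyp 2 : QF F) = QF.orthSum QF.hypPlane (QF.orthSum QF.hypPlane QF.nil) := rfl
lemma hyp_zero : (QF.hyp 0 : QF F) = QF.nil := rfl

end QFAux

namespace QFAux
variable {F : Type*} [Field F]
set_option linter.unusedSectionVars false

-- index normalization (source side, dim (2+2)+((2+(2+0))+0) = 8)
lemma iL0 : (Fin.castAdd ((2+(2+0))+0) (Fin.castAdd 2 (0 : Fin 2))) = (0 : Fin 8) := rfl
lemma iL1 : (Fin.castAdd ((2+(2+0))+0) (Fin.castAdd 2 (1 : Fin 2))) = (1 : Fin 8) := rfl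
lemma iL2 : (Fin.castAdd ((2+(2+0))+0) (Fin.natAdd 2 (0 : Fin 2))) = (2 : Fin 8) := rfl
lemma iL3 : (Fin.castAdd ((2+(2+0))+0) (Fin.natAdd 2 (1 : Fin 2))) = (3 : Fin 8) := rfl
lemma iL4 : (Fin.natAdd (2+2) (Fin.castAdd 0 (Fin.castAdd (2+0) (0 : Fin 2)))) = (4 : Fin 8) := rfl
lemma iL5 : (Fin.natAdd (2+2) (Fin.castAdd 0 (Fin.castAdd (2+0) (1 : Fin 2)))) = (5 : Fin 8) := rfl
lemma iL6 : (Fin.natAdd (2+2) (Fin.castAdd 0 (Fin.natAdd 2 (Fin.castAdd 0 (0 : Fin 2))))) = (6 : Fin 8) := rfl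
lemma iL7 : (Fin.natAdd (2+2) (Fin.castAdd 0 (Fin.natAdd 2 (Fin.castAdd 0 (1 : Fin 2))))) = (7 : Fin 8) := rfl
-- target side, dim ((2+2)+(2+2))+(0+0) = 8
lemma iR0 : (Fin.castAdd (0+0) (Fin.castAdd (2+2) (Fin.castAdd 2 (0 : Fin 2)))) = (0 : Fin 8) := rfl
lemma iR1 : (Fin.castAdd (0+0) (Fin.castAdd (2+2) (Fin.castAdd 2 (1 : Fin 2)))) = (1 : Fin 8) := rfl
lemma iR2 : (Fin.castAdd (0+0) (Fin.castAdd (2+2) (Fin.natAdd 2 (0 : Fin 2)))) = (2 : Fin 8) := rfl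
lemma iR3 : (Fin.castAdd (0+0) (Fin.castAdd (2+2) (Fin.natAdd 2 (1 : Fin 2)))) = (3 : Fin 8) := rfl
lemma iR4 : (Fin.castAdd (0+0) (Fin.natAdd (2+2) (Fin.castAdd 2 (0 : Fin 2)))) = (4 : Fin 8) := rfl
lemma iR5 : (Fin.castAdd (0+0) (Fin.natAdd (2+2) (Fin.castAdd 2 (1 : Fin 2)))) = (5 : Fin 8) := rfl
lemma iR6 : (Fin.castAdd (0+0) (Fin.natAdd (2+2) (Fin.natAdd 2 (0 : Fin 2)))) = (6 : Fin 8) := rfl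
lemma iR7 : (Fin.castAdd (0+0) (Fin.natAdd (2+2) (Fin.natAdd 2 (1 : Fin 2)))) = (7 : Fin 8) := rfl

lemma fmk0 (h : 0 < 8) : (⟨0,h⟩ : Fin 8) = (0 : Fin 8) := rfl
lemma fmk1 (h : 1 < 8) : (⟨1,h⟩ : Fin 8) = (1 : Fin 8) := rfl
lemma fmk2 (h : 2 < 8) : (⟨2,h⟩ : Fin 8) = (2 : Fin 8) := rfl
lemma fmk3 (h : 3 < 8) : (⟨3,h⟩ : Fin 8) = (3 : Fin 8) := rfl
lemma fmk4 (h : 4 < 8) : (⟨4,h⟩ : Fin 8) = (4 : Fin 8) := rfl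
lemma fmk5 (h : 5 < 8) : (⟨5,h⟩ : Fin 8) = (5 : Fin 8) := rfl
lemma fmk6 (h : 6 < 8) : (⟨6,h⟩ : Fin 8) = (6 : Fin 8) := rfl
lemma fmk7 (h : 7 < 8) : (⟨7,h⟩ : Fin 8) = (7 : Fin 8) := rfl

lemma vec8_0 {α : Type*} (a0 a1 a2 a3 a4 a5 a6 a7 : α) : (![a0,a1,a2,a3,a4,a5,a6,a7] : Fin 8 → α) 0 = a0 := rfl
lemma vec8_1 {α : Type*} (a0 a1 a2 a3 a4 a5 a6 a7 : α) : (![a0,a1,a2,a3,a4,a5,a6,a7] : Fin 8 → α) 1 = a1 := rfl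
lemma vec8_2 {α : Type*} (a0 a1 a2 a3 a4 a5 a6 a7 : α) : (![a0,a1,a2,a3,a4,a5,a6,a7] : Fin 8 → α) 2 = a2 := rfl
lemma vec8_3 {α : Type*} (a0 a1 a2 a3 a4 a5 a6 a7 : α) : (![a0,a1,a2,a3,a4,a5,a6,a7] : Fin 8 → α) 3 = a3 := rfl
lemma vec8_4 {α : Type*} (a0 a1 a2 a3 a4 a5 a6 a7 : α) : (![a0,a1,a2,a3,a4,a5,a6,a7] : Fin 8 → α) 4 = a4 := rfl
lemma vec8_5 {α : Type*} (a0 a1 a2 a3 a4 a5 a6 a7 : α) : (![a0,a1,a2,a3,a4,a5,a6,a7] : Fin 8 → α) 5 = a5 := rfl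
lemma vec8_6 {α : Type*} (a0 a1 a2 a3 a4 a5 a6 a7 : α) : (![a0,a1,a2,a3,a4,a5,a6,a7] : Fin 8 → α) 6 = a6 := rfl
lemma vec8_7 {α : Type*} (a0 a1 a2 a3 a4 a5 a6 a7 : α) : (![a0,a1,a2,a3,a4,a5,a6,a7] : Fin 8 → α) 7 = a7 := rfl

lemma vec8_mk0 {α : Type*} (a0 a1 a2 a3 a4 a5 a6 a7 : α) (h : 0 < 8) : (![a0,a1,a2,a3,a4,a5,a6,a7] : Fin 8 → α) ⟨0,h⟩ = a0 := rfl
lemma vec8_mk1 {α : Type*} (a0 a1 a2 a3 a4 a5 a6 a7 : α) (h : 1 < 8) : (![a0,a1,a2,a3,a4,a5,a6,a7] : Fin 8 → α) ⟨1,h⟩ = a1 := rfl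
lemma vec8_mk2 {α : Type*} (a0 a1 a2 a3 a4 a5 a6 a7 : α) (h : 2 < 8) : (![a0,a1,a2,a3,a4,a5,a6,a7] : Fin 8 → α) ⟨2,h⟩ = a2 := rfl
lemma vec8_mk3 {α : Type*} (a0 a1 a2 a3 a4 a5 a6 a7 : α) (h : 3 < 8) : (![a0,a1,a2,a3,a4,a5,a6,a7] : Fin 8 → α) ⟨3,h⟩ = a3 := rfl
lemma vec8_mk4 {α : Type*} (a0 a1 a2 a3 a4 a5 a6 a7 : α) (h : 4 < 8) : (![a0,a1,a2,a3,a4,a5,a6,a7] : Fin 8 → α) ⟨4,h⟩ = a4 := rfl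
lemma vec8_mk5 {α : Type*} (a0 a1 a2 a3 a4 a5 a6 a7 : α) (h : 5 < 8) : (![a0,a1,a2,a3,a4,a5,a6,a7] : Fin 8 → α) ⟨5,h⟩ = a5 := rfl
lemma vec8_mk6 {α : Type*} (a0 a1 a2 a3 a4 a5 a6 a7 : α) (h : 6 < 8) : (![a0,a1,a2,a3,a4,a5,a6,a7] : Fin 8 → α) ⟨6,h⟩ = a6 := rfl
lemma vec8_mk7 {α : Type*} (a0 a1 a2 a3 a4 a5 a6 a7 : α) (h : 7 < 8) : (![a0,a1,a2,a3,a4,a5,a6,a7] : Fin 8 → α) ⟨7,h⟩ = a7 := rfl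

lemma eval_hyp2 (x : Fin (QF.hyp (F := F) 2).dim → F) :
    (QF.hyp (F := F) 2).eval x
      = x (Fin.castAdd (2+0) (0 : Fin 2)) * x (Fin.castAdd (2+0) (1 : Fin 2))
        + x (Fin.natAdd 2 (Fin.castAdd 0 (0 : Fin 2))) * x (Fin.natAdd 2 (Fin.castAdd 0 (1 : Fin 2))) := by
  show (QF.orthSum QF.hypPlane (QF.orthSum QF.hypPlane QF.nil)).eval x = _
  refine (eval_orthSum QF.hypPlane (QF.orthSum QF.hypPlane QF.nil) x).trans ?_
  simp only [eval_orthSum, eval_hypPlane, eval_nil, add_zero]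
  exact congrArg₂ (· + ·) (eval_hypPlane _) (eval_hypPlane _)

lemma eval_hyp0 (x : Fin (QF.hyp (F := F) 0).dim → F) : (QF.hyp (F := F) 0).eval x = 0 := by
  show (QF.nil (F := F)).eval x = 0
  exact eval_nil x

/-- forward substitution -/
def eFun (u v w : F) : (Fin 8 → F) → (Fin 8 → F) := fun y =>
  ![y 0 + y 4 + (w * v / (u + v)) * y 5,
    y 1,
    y 2,
    ((u + v) * y 3 + y 6 + v * y 7) / u,
    y 4 + (w * v / (u + v)) * y 5,
    y 1 + y 5,
    y 2 + y 7,
    (y 6 + v * y 7) / v]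

def eInv (u v w : F) : (Fin 8 → F) → (Fin 8 → F) := fun x =>
  ![x 0 - x 4,
    x 1,
    x 2,
    (u * x 3 - v * x 7) / (u + v),
    x 4 - (w * v / (u + v)) * (x 5 - x 1),
    x 5 - x 1,
    v * x 7 - v * (x 6 - x 2),
    x 6 - x 2]

set_option maxHeartbeats 1000000 in
noncomputable def eq8 (u v w : F) (hu : u ≠ 0) (hv : v ≠ 0) (huv : u + v ≠ 0) :
    (Fin 8 → F) ≃ₗ[F] (Fin 8 → F) where
  toFun := eFun u v w
  invFun := eInv u v w
  map_add' p q := by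
    funext i
    fin_cases i <;> simp [eFun, vec8_0, vec8_1, vec8_2, vec8_3, vec8_4, vec8_5, vec8_6, vec8_7, vec8_mk0, vec8_mk1, vec8_mk2, vec8_mk3, vec8_mk4, vec8_mk5, vec8_mk6, vec8_mk7, fmk0, fmk1, fmk2, fmk3, fmk4, fmk5, fmk6, fmk7] <;>
      (first
        | rfl
        | ring1
        | (rw [div_eq_iff hv]; ring1)
        | (rw [div_eq_iff hu]; ring1)
        | (rw [div_eq_iff huv]; ring1)
        | (rw [mul_comm v (_ / v), div_mul_cancel₀ _ hv]; ring1)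
        | (rw [mul_comm u (_ / u), div_mul_cancel₀ _ hu, mul_comm v (_ / v),
               div_mul_cancel₀ _ hv, div_eq_iff huv]; ring1)
        | (rw [mul_comm (u+v) (_ / (u+v)), div_mul_cancel₀ _ huv, div_eq_iff hu]; ring1))
  map_smul' a p := by
    funext i
    fin_cases i <;> simp [eFun, vec8_0, vec8_1, vec8_2, vec8_3, vec8_4, vec8_5, vec8_6, vec8_7, vec8_mk0, vec8_mk1, vec8_mk2, vec8_mk3, vec8_mk4, vec8_mk5, vec8_mk6, vec8_mk7, fmk0, fmk1, fmk2, fmk3, fmk4, fmk5, fmk6, fmk7] <;>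
      (first
        | rfl
        | ring1
        | (rw [div_eq_iff hv]; ring1)
        | (rw [div_eq_iff hu]; ring1)
        | (rw [div_eq_iff huv]; ring1)
        | (rw [mul_comm v (_ / v), div_mul_cancel₀ _ hv]; ring1)
        | (rw [mul_comm u (_ / u), div_mul_cancel₀ _ hu, mul_comm v (_ / v),
               div_mul_cancel₀ _ hv, div_eq_iff huv]; ring1)
        | (rw [mul_comm (u+v) (_ / (u+v)), div_mul_cancel₀ _ huv, div_eq_iff hu]; ring1))
  left_inv y := by
    funext i
    fin_cases i <;>
      simp only [eFun, eInv, vec8_0, vec8_1, vec8_2, vec8_3, vec8_4, vec8_5, vec8_6, vec8_7, vec8_mk0, vec8_mk1, vec8_mk2, vec8_mk3, vec8_mk4, vec8_mk5, vec8_mk6, vec8_mk7, fmk0, fmk1, fmk2, fmk3, fmk4, fmk5, fmk6, fmk7] <;>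
      (first
        | rfl
        | ring1
        | (rw [div_eq_iff hv]; ring1)
        | (rw [div_eq_iff hu]; ring1)
        | (rw [div_eq_iff huv]; ring1)
        | (rw [mul_comm v (_ / v), div_mul_cancel₀ _ hv]; ring1)
        | (rw [mul_comm u (_ / u), div_mul_cancel₀ _ hu, mul_comm v (_ / v),
               div_mul_cancel₀ _ hv, div_eq_iff huv]; ring1)
        | (rw [mul_comm (u+v) (_ / (u+v)), div_mul_cancel₀ _ huv, div_eq_iff hu]; ring1))
  right_inv x := by
    funext i
    fin_cases i <;>
      simp only [eFun, eInv, vec8_0, vec8_1, vec8_2, vec8_3, vec8_4, vec8_5, vec8_6, vec8_7, vec8_mk0, vec8_mk1, vec8_mk2, vec8_mk3, vec8_mk4, vec8_mk5, vec8_mk6, vec8_mk7, fmk0, fmk1, fmk2, fmk3, fmk4, fmk5, fmk6, fmk7] <;>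
      (first
        | rfl
        | ring1
        | (rw [div_eq_iff hv]; ring1)
        | (rw [div_eq_iff hu]; ring1)
        | (rw [div_eq_iff huv]; ring1)
        | (rw [mul_comm v (_ / v), div_mul_cancel₀ _ hv]; ring1)
        | (rw [mul_comm u (_ / u), div_mul_cancel₀ _ hu, mul_comm v (_ / v),
               div_mul_cancel₀ _ hv, div_eq_iff huv]; ring1)
        | (rw [mul_comm (u+v) (_ / (u+v)), div_mul_cancel₀ _ huv, div_eq_iff hu]; ring1))

lemma eq8_apply (u v w : F) (hu : u ≠ 0) (hv : v ≠ 0) (huv : u + v ≠ 0) (x : Fin 8 → F) :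
    eq8 u v w hu hv huv x = eFun u v w x := rfl

end QFAux

open QFAux

open QF in
/-- Over a field `F` of characteristic 2, for `u, v ∈ F*` with
`u + v ≠ 0` and `w ∈ F`, in `W_q(F)` one has
`⟨1,u+v⟩_b ⊗ [1,w] = ⟨1,u⟩_b ⊗ [1, wu/(u+v)] + ⟨1,v⟩_b ⊗ [1, wv/(u+v)]`. -/
theorem sum_relation
    (F : Type*) [Field F] [CharP F 2] (u v : F) (hu : u ≠ 0) (hv : v ≠ 0)
    (huv : u + v ≠ 0) (w : F) :
    WittEquiv ((bin 1 w).orthSum (smul (u + v) (bin 1 w)))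
      (((bin 1 (w * u / (u + v))).orthSum (smul u (bin 1 (w * u / (u + v))))).orthSum
        ((bin 1 (w * v / (u + v))).orthSum (smul v (bin 1 (w * v / (u + v)))))) := by
  have h2 : (2 : F) = 0 := by exact_mod_cast CharP.cast_eq_zero F 2
  refine ⟨2, 0, 0, 0, ?_⟩
  have hL : (((bin 1 w).orthSum (smul (u + v) (bin 1 w))).orthSum
      ((hyp 2).orthSum (zeros 0))) = (⟨8, !![1, 1, 0, 0, 0, 0, 0, 0;
      0, w, 0, 0, 0, 0, 0, 0;
      0, 0, (u+v)*1, (u+v)*1, 0, 0, 0, 0;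
      0, 0, (u+v)*0, (u+v)*w, 0, 0, 0, 0;
      0, 0, 0, 0, 0, 1, 0, 0;
      0, 0, 0, 0, 0, 0, 0, 0;
      0, 0, 0, 0, 0, 0, 0, 1;
      0, 0, 0, 0, 0, 0, 0, 0]⟩ : QF F) := by
    show (⟨8, ((((bin 1 w).orthSum (smul (u + v) (bin 1 w))).orthSum
      ((hyp 2).orthSum (zeros 0)))).c⟩ : QF F) = _
    congr 1
    ext i j
    fin_cases i <;> fin_cases j <;> rfl
  have hR : ((((bin 1 (w * u / (u + v))).orthSum (smul u (bin 1 (w * u / (u + v))))).orthSum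
        ((bin 1 (w * v / (u + v))).orthSum (smul v (bin 1 (w * v / (u + v)))))).orthSum
      ((hyp 0).orthSum (zeros 0))) = (⟨8, !![1, 1, 0, 0, 0, 0, 0, 0;
      0, (w*u/(u+v)), 0, 0, 0, 0, 0, 0;
      0, 0, u*1, u*1, 0, 0, 0, 0;
      0, 0, u*0, u*(w*u/(u+v)), 0, 0, 0, 0;
      0, 0, 0, 0, 1, 1, 0, 0;
      0, 0, 0, 0, 0, (w*v/(u+v)), 0, 0;
      0, 0, 0, 0, 0, 0, v*1, v*1;
      0, 0, 0, 0, 0, 0, v*0, v*(w*v/(u+v))]⟩ : QF F) := by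
    show (⟨8, (((((bin 1 (w * u / (u + v))).orthSum (smul u (bin 1 (w * u / (u + v))))).orthSum
        ((bin 1 (w * v / (u + v))).orthSum (smul v (bin 1 (w * v / (u + v)))))).orthSum
      ((hyp 0).orthSum (zeros 0)))).c⟩ : QF F) = _
    congr 1
    ext i j
    fin_cases i <;> fin_cases j <;> rfl
  rw [hL, hR]
  refine ⟨eq8 u v w hu hv huv, fun x => ?_⟩
  simp only [QF.eval, Fin.sum_univ_eight]
  have hiu : u * u⁻¹ = 1 := mul_inv_cancel₀ hu
  have hiv : v * v⁻¹ = 1 := mul_inv_cancel₀ hv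
  have his : (u + v) * (u + v)⁻¹ = 1 := mul_inv_cancel₀ huv
  simp only [eq8_apply, eFun, Matrix.of_apply,
    vec8_0, vec8_1, vec8_2, vec8_3, vec8_4, vec8_5, vec8_6, vec8_7,
    zero_mul, mul_zero, one_mul, mul_one, add_zero, zero_add]
  linear_combination ((1)*x 2*x 6 + (1)*w*(u+v)⁻¹*x 6^2 + (1)*v*x 2*x 7 + (1)*v*x 2*x 3 + (2)*v*w*(u+v)⁻¹*x 6*x 7 + (2)*v*w*(u+v)⁻¹*x 3*x 6 + (1)*v^2*w*(u+v)⁻¹*x 7^2 + (2)*v^2*w*(u+v)⁻¹*x 3*x 7 + (1)*v^2*w*(u+v)⁻¹*x 3^2 + (1)*u*x 2*x 3 + (2)*u*w*(u+v)⁻¹*x 3*x 6 + (1)*u*w*u⁻¹*(u+v)⁻¹*x 6^2 + (2)*u*v*w*(u+v)⁻¹*x 3*x 7 + (2)*u*v*w*(u+v)⁻¹*x 3^2 + (2)*u*v*w*u⁻¹*(u+v)⁻¹*x 6*x 7 + (2)*u*v*w*u⁻¹*(u+v)⁻¹*x 3*x 6 + (1)*u*v^2*w*u⁻¹*(u+v)⁻¹*x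 7^2 + (2)*u*v^2*w*u⁻¹*(u+v)⁻¹*x 3*x 7 + (1)*u*v^2*w*u⁻¹*(u+v)⁻¹*x 3^2 + (1)*u^2*w*(u+v)⁻¹*x 3^2 + (2)*u^2*w*u⁻¹*(u+v)⁻¹*x 3*x 6 + (2)*u^2*v*w*u⁻¹*(u+v)⁻¹*x 3*x 7 + (2)*u^2*v*w*u⁻¹*(u+v)⁻¹*x 3^2 + (1)*u^3*w*u⁻¹*(u+v)⁻¹*x 3^2) * hiu + ((1)*x 6*x 7 + (1)*x 2*x 6 + (1)*w*(u+v)⁻¹*x 6^2 + (1)*v*x 7^2 + (1)*v*x 2*x 7 + (2)*v*w*(u+v)⁻¹*x 6*x 7 + (1)*v*w*v⁻¹*(u+v)⁻¹*x 6^2 + (1)*v^2*w*(u+v)⁻¹*x 7^2 + (2)*v^2*w*v⁻¹*(u+v)⁻¹*x 6*x 7 + (1)*v^3*w*v⁻¹*(u+v)⁻¹*x 7^2) * hiv + ((2)*w*x 3*x 6 + (1)*w*x 1^2 + (2)*v*w*x 3*x 7 + (1)*v*w*x 3^2 + (1)*u*w*x 3^2) * his + ((1)*x 4^2 + (1)*x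 2*x 6 + (1)*x 1*x 4 + (1)*x 0*x 4 + (1)*w*x 3*x 6 + (1)*w*(u+v)⁻¹*x 6^2 + (1)*v*x 7^2 + (2)*v*x 2*x 7 + (1)*v*w*x 3*x 7 + (2)*v*w*(u+v)⁻¹*x 6*x 7 + (1)*v*w*(u+v)⁻¹*x 5^2 + (2)*v*w*(u+v)⁻¹*x 4*x 5 + (2)*v*w*(u+v)⁻¹*x 1*x 5 + (1)*v*w*(u+v)⁻¹*x 0*x 5 + (1)*v^2*w*(u+v)⁻¹*x 7^2 + (1)*v^2*w^2*(u+v)⁻¹^2*x 5^2) * h2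
end

section
/- Let F be a field of characteristic 2, u, v ∈ F* and w ∈ F. Then in the Witt group W_q(F) one has ⟨1,uv⟩_b ⊗ [1,w] = ⟨1,u⟩_b ⊗ [1,w] + ⟨1,v⟩_b ⊗ [u, w/u]. -/
section Aux
open QF
variable {F : Type*} [Field F]

@[local simp] lemma cv0 {α : Type*} (a0 a1 a2 a3 a4 a5 a6 a7 : α) :
    ![a0,a1,a2,a3,a4,a5,a6,a7] (0 : Fin 8) = a0 := rfl
@[local simp] lemma cv1 {α : Type*} (a0 a1 a2 a3 a4 a5 a6 a7 : α) :
    ![a0,a1,a2,a3,a4,a5,a6,a7] (1 : Fin 8) = a1 := rfl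
@[local simp] lemma cv2 {α : Type*} (a0 a1 a2 a3 a4 a5 a6 a7 : α) :
    ![a0,a1,a2,a3,a4,a5,a6,a7] (2 : Fin 8) = a2 := rfl
@[local simp] lemma cv3 {α : Type*} (a0 a1 a2 a3 a4 a5 a6 a7 : α) :
    ![a0,a1,a2,a3,a4,a5,a6,a7] (3 : Fin 8) = a3 := rfl
@[local simp] lemma cv4 {α : Type*} (a0 a1 a2 a3 a4 a5 a6 a7 : α) :
    ![a0,a1,a2,a3,a4,a5,a6,a7] (4 : Fin 8) = a4 := rfl
@[local simp] lemma cv5 {α : Type*} (a0 a1 a2 a3 a4 a5 a6 a7 : α) :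
    ![a0,a1,a2,a3,a4,a5,a6,a7] (5 : Fin 8) = a5 := rfl
@[local simp] lemma cv6 {α : Type*} (a0 a1 a2 a3 a4 a5 a6 a7 : α) :
    ![a0,a1,a2,a3,a4,a5,a6,a7] (6 : Fin 8) = a6 := rfl
@[local simp] lemma cv7 {α : Type*} (a0 a1 a2 a3 a4 a5 a6 a7 : α) :
    ![a0,a1,a2,a3,a4,a5,a6,a7] (7 : Fin 8) = a7 := rfl

@[local simp] lemma mk0 (h : 0 < 8) : (⟨0, h⟩ : Fin 8) = 0 := rfl
@[local simp] lemma mk1 (h : 1 < 8) : (⟨1, h⟩ : Fin 8) = 1 := rfl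
@[local simp] lemma mk2 (h : 2 < 8) : (⟨2, h⟩ : Fin 8) = 2 := rfl
@[local simp] lemma mk3 (h : 3 < 8) : (⟨3, h⟩ : Fin 8) = 3 := rfl
@[local simp] lemma mk4 (h : 4 < 8) : (⟨4, h⟩ : Fin 8) = 4 := rfl
@[local simp] lemma mk5 (h : 5 < 8) : (⟨5, h⟩ : Fin 8) = 5 := rfl
@[local simp] lemma mk6 (h : 6 < 8) : (⟨6, h⟩ : Fin 8) = 6 := rfl
@[local simp] lemma mk7 (h : 7 < 8) : (⟨7, h⟩ : Fin 8) = 7 := rfl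

lemma QF.eval_orthSum' (q q' : QF F) (x : Fin (q.orthSum q').dim → F) :
    (orthSum q q').eval x
      = q.eval (fun i => x (Fin.castAdd q'.dim i)) + q'.eval (fun i => x (Fin.natAdd q.dim i)) := by
  show ∑ i, ∑ j, _ = _
  unfold QF.eval QF.orthSum
  rw [← finSumFinEquiv.sum_comp (ι := _)]
  simp only [← finSumFinEquiv.sum_comp (ι := _), Fintype.sum_sum_type]
  simp [Matrix.fromBlocks, Matrix.reindex_apply, Matrix.submatrix_apply]

lemma QF.eval_smul' (a : F) (q : QF F) (x : Fin (smul a q).dim → F) :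
    (smul a q).eval x = a * q.eval (fun i : Fin q.dim => x i) := by
  show ∑ i, ∑ j, (a • q.c) i j * x i * x j = a * ∑ i, ∑ j, q.c i j * x i * x j
  simp [Finset.mul_sum, mul_assoc]

lemma QF.eval_bin' (a b : F) (x : Fin (bin a b).dim → F) :
    (bin a b).eval x = a * x (0 : Fin 2) ^ 2 + x (0 : Fin 2) * x (1 : Fin 2) + b * x (1 : Fin 2) ^ 2 := by
  show (∑ i : Fin 2, ∑ j : Fin 2, (!![a, 1; 0, b] : Matrix (Fin 2) (Fin 2) F) i j * x i * x j) = _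
  simp [Fin.sum_univ_succ]; ring

lemma QF.eval_nil' (x : Fin (nil : QF F).dim → F) : (nil : QF F).eval x = 0 := by
  simp [QF.eval, QF.nil]

lemma QF.eval_zeros' (l : ℕ) (x : Fin (zeros l : QF F).dim → F) : (zeros l : QF F).eval x = 0 := by
  simp [QF.eval, QF.zeros, QF.diag, Matrix.diagonal]

/-- the linear change of variables -/
def eqv (u ui W : F) (hui : u * ui = 1) (h2 : (2 : F) = 0) :
    (Fin 8 → F) ≃ₗ[F] (Fin 8 → F) where
  toFun x := ![x 0, x 1, x 4 + W * x 6 + x 7, x 4 + ui * x 5,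
      W * x 6 + x 7, u * x 4 + x 5 + x 6, x 2, u * x 3]
  invFun y := ![y 0, y 1, y 6, ui * y 7, y 2 + y 4, u * (y 2 + y 3 + y 4),
      u * y 3 + y 5, u * W * y 3 + y 4 + W * y 5]
  map_add' x y := by
    funext i; fin_cases i <;> simp <;> ring
  map_smul' c x := by
    funext i; fin_cases i <;> simp <;> ring
  left_inv x := by
    funext i
    fin_cases i
    · simp
    · simp
    · simp
    · simp; linear_combination x 3 * hui
    · simp; linear_combination (x 7 + x 6 * W) * h2
    · simp; linear_combination x 5 * hui + (x 7 * u + x 6 * u * W + x 4 * u) * h2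
    · simp; linear_combination x 5 * hui + (x 5 + x 4 * u) * h2
    · simp; linear_combination x 5 * W * hui + (x 6 * W + x 5 * W + x 4 * u * W) * h2
  right_inv y := by
    funext i
    fin_cases i
    · simp
    · simp
    · simp; linear_combination (y 5 * W + y 4 + y 3 * u * W) * h2
    · simp; linear_combination (y 4 + y 3 + y 2) * hui + (y 4 + y 2) * h2
    · simp; linear_combination (y 5 * W + y 3 * u * W) * h2
    · simp; linear_combination (y 4 * u + y 3 * u + y 2 * u) * h2
    · simp
    · simp; linear_combination y 7 * hui

end Aux


open QF in
lemma key_eval {F : Type*} [Field F] [CharP F 2] (u v : F) (hu : u ≠ 0) (w : F)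
    (hui : u * u⁻¹ = 1) (h2 : (2 : F) = 0) (x : Fin 8 → F) :
    ((((bin 1 w).orthSum (smul u (bin 1 w))).orthSum
        ((bin u (w / u)).orthSum (smul v (bin u (w / u))))).orthSum
      ((hyp 0).orthSum (zeros 0))).eval ((eqv u u⁻¹ (w / u) hui h2) x)
      = (((bin 1 w).orthSum (smul (u * v) (bin 1 w))).orthSum
          ((hyp 2).orthSum (zeros 0))).eval x := by
  erw [QF.eval_orthSum']
  rw [QF.eval_orthSum' ((bin 1 w).orthSum (smul (u * v) (bin 1 w)))
    ((hyp 2).orthSum (zeros 0)) x]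
  simp only [QF.eval_orthSum', QF.eval_smul', QF.eval_bin', QF.eval_nil', QF.eval_zeros',
    QF.hyp, QF.hypPlane, QF.sumList, List.replicate, List.foldr]
  simp only [QF.orthSum, QF.smul, QF.bin, QF.nil, QF.zeros, QF.diag, QF.hyp, QF.sumList,
    QF.hypPlane, eqv, Fin.castAdd, Fin.castLE, Fin.natAdd, Fin.isValue]
  norm_num
  simp only [mk0, mk1, mk2, mk3, mk4, mk5, mk6, mk7]
  set W := w / u with hW
  have hw : w = u * W := by rw [hW]; field_simp
  rw [hw]
  linear_combination
    (x 5*x 7 + x 5*x 6*W + x 5^2*W + x 5^2*u*u⁻¹*W + x 4*x 5 + 2*x 4*x 5*u*W) * hui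
    + (x 7^2*u + 2*x 6*x 7*u*W + x 6^2*W + x 6^2*u*W^2 + x 5*x 7 + 2*x 5*x 6*W + x 5^2*W
       + 2*x 4*x 7*u + 3*x 4*x 6*u*W + 2*x 4*x 5*u*W + x 4^2*u + x 4^2*u^2*W) * h2

open QF in
/-- Over a field `F` of characteristic 2, for `u, v ∈ F*` and `w ∈ F`,
in `W_q(F)` one has `⟨1,uv⟩_b ⊗ [1,w] = ⟨1,u⟩_b ⊗ [1,w] + ⟨1,v⟩_b ⊗ [u, w/u]`. -/
theorem product_relation
    (F : Type*) [Field F] [CharP F 2] (u v : F) (hu : u ≠ 0) (hv : v ≠ 0) (w : F) :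
    WittEquiv ((bin 1 w).orthSum (smul (u * v) (bin 1 w)))
      (((bin 1 w).orthSum (smul u (bin 1 w))).orthSum
        ((bin u (w / u)).orthSum (smul v (bin u (w / u))))) := by
  classical
  have h2 : (2 : F) = 0 := CharTwo.two_eq_zero
  have hui : u * u⁻¹ = 1 := mul_inv_cancel₀ hu
  exact ⟨2, 0, 0, 0, eqv u u⁻¹ (w / u) hui h2, fun x => key_eval u v hu w hui h2 x⟩
end
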